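/- Let p be a prime with p ≡ 1 (mod 3) and let a be a nonzero integer with a² < 4p. Then the real number arctan(√(4p − a²)/a)/π is irrational. -/
import Mathlib

open Real Complex Polynomial in
lemma intOfPow {z : ℂ} {n : ℕ} (hn : n ≠ 0) (h : z ^ n = 1) : IsIntegral ℤ z := by
  refine ⟨X ^ n - C 1, monic_X_pow_sub_C 1 hn, ?_⟩
  simp [h]

lemma ratInt {q : ℚ} (h : IsIntegral ℤ ((q : ℝ) : ℂ)) : ∃ z : ℤ, (z : ℚ) = q := by
  rw [show ((q:ℝ):ℂ) = algebraMap ℝ ℂ (q:ℝ) from rfl,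
    isIntegral_algebraMap_iff (algebraMap ℝ ℂ).injective] at h
  rw [show ((q:ℝ)) = algebraMap ℚ ℝ q from rfl,
    isIntegral_algebraMap_iff (algebraMap ℚ ℝ).injective] at h
  exact IsIntegrallyClosed.isIntegral_iff.mp h

lemma keyNat (p : ℕ) (hp : p.Prime) (hp1 : p % 3 = 1) (b k : ℕ) (hb : b ≠ 0)
    (hk1 : 1 ≤ k) (hk3 : k ≤ 3) (h : b ^ 2 = k * p) : False := by
  rcases Nat.lt_or_ge k 2 with hk | hk
  · interval_cases k
    have hbdvd : b ∣ p := ⟨b, by rw [← sq]; linarith⟩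
    rcases hp.eq_one_or_self_of_dvd b hbdvd with h1 | h1
    · subst h1; have := hp.two_le; simp at h; omega
    · subst h1; nlinarith [hp.two_le]
  · have hpb : p ∣ b := hp.dvd_of_dvd_pow (show p ∣ b ^ 2 from ⟨k, by rw [h, Nat.mul_comm]⟩)
    obtain ⟨c, rfl⟩ := hpb
    have h' : p * (p * c ^ 2) = p * k := by
      rw [show p * (p * c ^ 2) = (p * c) ^ 2 by ring, h, Nat.mul_comm]
    have hc : p * c ^ 2 = k := Nat.eq_of_mul_eq_mul_left hp.pos h'
    have hpk : p ≤ k := Nat.le_of_dvd (by omega) ⟨c ^ 2, hc.symm⟩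
    have := hp.two_le
    omega

theorem stmt15 (p : ℕ) (hp : p.Prime) (hp1 : p % 3 = 1)
    (a : ℤ) (ha : a ≠ 0) (ha2 : a ^ 2 < 4 * p) :
    Irrational (Real.arctan (Real.sqrt ((4 * p : ℝ) - (a : ℝ) ^ 2) / (a : ℝ)) / Real.pi) := by
  set t : ℝ := Real.sqrt ((4 * p : ℝ) - (a:ℝ)^2) / (a:ℝ) with htdef
  set θ := Real.arctan t with hθdef
  rintro ⟨q, hq⟩
  have hπ := Real.pi_ne_zero
  have hθ : θ = q * Real.pi := by
    field_simp at hq; linarith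
  have hA : (a:ℝ) ≠ 0 := Int.cast_ne_zero.mpr ha
  have hP0 : 0 < (p:ℝ) := by exact_mod_cast hp.pos
  have hle : (0:ℝ) ≤ 4*(p:ℝ) - (a:ℝ)^2 := by
    have : ((a:ℝ))^2 < 4*(p:ℝ) := by exact_mod_cast ha2
    linarith
  have ht2 : t^2 = (4*(p:ℝ) - (a:ℝ)^2)/(a:ℝ)^2 := by
    rw [htdef, div_pow, Real.sq_sqrt hle]
  have hcos : Real.cos (2*θ) * (2*(p:ℝ)) = (a:ℝ)^2 - 2*(p:ℝ) := by
    rw [Real.cos_two_mul, hθdef, Real.cos_arctan, div_pow, one_pow,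
      Real.sq_sqrt (by positivity), ht2]
    field_simp
    ring
  -- roots of unity and integrality
  have hden : q.den ≠ 0 := q.den_nz
  have hnum : (q.num : ℝ) = (q:ℝ) * (q.den:ℝ) := by
    have h2 : (q.num : ℚ) = q * q.den :=
      (div_eq_iff (by exact_mod_cast hden : ((q.den:ℚ)) ≠ 0)).mp (Rat.num_div_den q)
    exact_mod_cast h2
  have key : (q.den:ℝ) * (2*θ) = (q.num:ℝ) * (2*Real.pi) := by
    rw [hθ, hnum]; ring
  have hζ : Complex.exp (2*θ*Complex.I) ^ q.den = 1 := by
    rw [← Complex.exp_nat_mul]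
    have : (q.den:ℂ) * (2*(θ:ℂ)*Complex.I) = (q.num:ℂ) * (2*Real.pi*Complex.I) := by
      rw [show (q.den:ℂ) * (2*(θ:ℂ)*Complex.I) = (((q.den:ℝ)*(2*θ) : ℝ):ℂ) * Complex.I by
        push_cast; ring, key]
      push_cast; ring
    rw [this]
    exact_mod_cast Complex.exp_int_mul_two_pi_mul_I q.num
  have hint1 : IsIntegral ℤ (Complex.exp (2*θ*Complex.I)) := intOfPow hden hζ
  have hint2 : IsIntegral ℤ (Complex.exp (-(2*θ*Complex.I))) := by
    refine intOfPow hden ?_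
    rw [Complex.exp_neg, inv_pow, hζ, inv_one]
  have hsum : IsIntegral ℤ (((2 * Real.cos (2*θ) : ℝ)):ℂ) := by
    have heq : (((2 * Real.cos (2*θ) : ℝ)):ℂ)
        = Complex.exp (2*θ*Complex.I) + Complex.exp (-(2*θ*Complex.I)) := by
      push_cast
      rw [Complex.cos, neg_mul]
      ring
    rw [heq]
    exact hint1.add hint2
  -- the rational value
  set r : ℚ := ((a:ℚ)^2 - 2*(p:ℚ))/(p:ℚ) with hrdef
  have hrR : (r:ℝ) = 2 * Real.cos (2*θ) := by
    rw [hrdef]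
    push_cast
    rw [div_eq_iff (ne_of_gt hP0)]
    linarith [hcos]
  obtain ⟨z, hz⟩ := ratInt (show IsIntegral ℤ ((r:ℝ):ℂ) by rw [hrR]; exact hsum)
  have hzp : z * (p:ℤ) = a^2 - 2*(p:ℤ) := by
    have hPQ : (p:ℚ) ≠ 0 := Nat.cast_ne_zero.mpr hp.pos.ne'
    have : (z:ℚ) * (p:ℚ) = (a:ℚ)^2 - 2*(p:ℚ) := by
      rw [hz, hrdef, div_mul_cancel₀ _ hPQ]
    exact_mod_cast this
  have hsq : a^2 = (z+2)*(p:ℤ) := by linear_combination -hzp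
  -- bounds
  have hzR : (z:ℝ) = 2 * Real.cos (2*θ) := by
    rw [← hrR]; exact_mod_cast congrArg (Rat.cast (K := ℝ)) hz
  have hz1 : (-2:ℤ) ≤ z := by
    have : (-2:ℝ) ≤ (z:ℝ) := by rw [hzR]; nlinarith [Real.neg_one_le_cos (2*θ)]
    exact_mod_cast this
  have hz2 : z ≤ 2 := by
    have : (z:ℝ) ≤ 2 := by rw [hzR]; nlinarith [Real.cos_le_one (2*θ)]
    exact_mod_cast this
  interval_cases z
  · -- a^2 = 0
    have h0 : a ^ 2 = 0 := by linarith
    exact ha (pow_eq_zero_iff two_ne_zero |>.mp h0)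
  · -- a^2 = p
    have hb2 : a.natAbs ^ 2 = 1 * p := by
      have := congrArg Int.natAbs hsq
      simpa [Int.natAbs_pow, Int.natAbs_mul] using this
    exact keyNat p hp hp1 _ 1 (Int.natAbs_ne_zero.mpr ha) (by norm_num) (by norm_num) hb2
  · have hb2 : a.natAbs ^ 2 = 2 * p := by
      have := congrArg Int.natAbs hsq
      simpa [Int.natAbs_pow, Int.natAbs_mul] using this
    exact keyNat p hp hp1 _ 2 (Int.natAbs_ne_zero.mpr ha) (by norm_num) (by norm_num) hb2
  · have hb2 : a.natAbs ^ 2 = 3 * p := by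
      have := congrArg Int.natAbs hsq
      simpa [Int.natAbs_pow, Int.natAbs_mul] using this
    exact keyNat p hp hp1 _ 3 (Int.natAbs_ne_zero.mpr ha) (by norm_num) (by norm_num) hb2
  · linarith
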